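/- arXiv:2001.05671 — 3 statements merged into one kernel-verified Lean document; each statement's English description precedes it below -/
import Mathlib

section
/- The recurrence e(i,s) = min{ e(i-1,s), j_{i,s} } holds, where j_{i,s} is the index of the leftmost occurrence of the character A[i] in B[e(i-1,s-1)+1..n] (taken to be n+1 if no such occurrence exists or if e(i-1,s-1) = n+1). -/
/-- Length of a longest common subsequence of `A` and `B`. -/
noncomputable def lcsLen {α : Type*} (A B : List α) : ℕ :=
  sSup {s | ∃ Z : List α, Z.length = s ∧ Z.Sublist A ∧ Z.Sublist B}

/-- `eTab A B i s` is the minimum `j` such that the LCS length of `A[1..i]` and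
`B[1..j]` equals `s`, and `|B| + 1` if no such `j` exists. -/
noncomputable def eTab {α : Type*} (A B : List α) (i s : ℕ) : ℕ :=
  sInf ({j | lcsLen (A.take i) (B.take j) = s} ∪ {B.length + 1})

/-- `jIdx A B i s` is the leftmost position `q` (1-indexed) of the character `A[i]` in
`B[e(i-1,s-1)+1..n]`, taken to be `n+1` if no such occurrence exists (in particular
when `e(i-1,s-1) = n+1`). -/
noncomputable def jIdx {α : Type*} [Inhabited α] (A B : List α) (i s : ℕ) : ℕ :=
  sInf ({q | eTab A B (i-1) (s-1) < q ∧ q ≤ B.length ∧ B[q-1]! = A[i-1]!}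
        ∪ {B.length + 1})

section Aux

variable {α : Type*}

lemma jIdx_spec [Inhabited α] (A B : List α) (i s : ℕ) (h : jIdx A B i s ≤ B.length) :
    eTab A B (i-1) (s-1) < jIdx A B i s ∧ jIdx A B i s ≤ B.length ∧
      B[jIdx A B i s - 1]! = A[i-1]! := by
  have hne : (({q | eTab A B (i-1) (s-1) < q ∧ q ≤ B.length ∧ B[q-1]! = A[i-1]!}
      ∪ {B.length + 1}) : Set ℕ).Nonempty := ⟨B.length + 1, Or.inr rfl⟩
  have hmem := Nat.sInf_mem hne
  rcases hmem with hm | hm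
  · exact hm
  · exfalso
    rw [Set.mem_singleton_iff] at hm
    unfold jIdx at h
    omega

lemma lcs_bdd (A B : List α) :
    BddAbove {s | ∃ Z : List α, Z.length = s ∧ Z.Sublist A ∧ Z.Sublist B} := by
  refine ⟨A.length, ?_⟩
  rintro s ⟨Z, rfl, hA, _⟩
  exact hA.length_le

lemma lcs_ne (A B : List α) :
    {s | ∃ Z : List α, Z.length = s ∧ Z.Sublist A ∧ Z.Sublist B}.Nonempty :=
  ⟨0, [], rfl, List.nil_sublist _, List.nil_sublist _⟩

lemma le_lcsLen {A B Z : List α} (hA : Z.Sublist A) (hB : Z.Sublist B) :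
    Z.length ≤ lcsLen A B :=
  le_csSup (lcs_bdd A B) ⟨Z, rfl, hA, hB⟩

lemma lcsLen_spec (A B : List α) :
    ∃ Z : List α, Z.length = lcsLen A B ∧ Z.Sublist A ∧ Z.Sublist B :=
  Nat.sSup_mem (lcs_ne A B) (lcs_bdd A B)

lemma lcsLen_nil (A : List α) : lcsLen A [] = 0 := by
  obtain ⟨Z, h, _, hB⟩ := lcsLen_spec A []
  rw [List.sublist_nil] at hB
  simp [hB] at h
  omega

lemma lcsLen_mono_right {A B B' : List α} (h : B.Sublist B') :
    lcsLen A B ≤ lcsLen A B' := by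
  obtain ⟨Z, hZ, hA, hB⟩ := lcsLen_spec A B
  exact hZ ▸ le_lcsLen hA (hB.trans h)

lemma lcsLen_mono_left {A A' B : List α} (h : A.Sublist A') :
    lcsLen A B ≤ lcsLen A' B := by
  obtain ⟨Z, hZ, hA, hB⟩ := lcsLen_spec A B
  exact hZ ▸ le_lcsLen (hA.trans h) hB

lemma lcsLen_concat_right_le (A L : List α) (b : α) :
    lcsLen A (L ++ [b]) ≤ lcsLen A L + 1 := by
  obtain ⟨Z, hZ, hA, hB⟩ := lcsLen_spec A (L ++ [b])
  rw [List.sublist_append_iff] at hB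
  obtain ⟨Z₁, Z₂, rfl, h₁, h₂⟩ := hB
  have hlen2 : Z₂.length ≤ 1 := by simpa using h₂.length_le
  have h1A : Z₁.Sublist A := (List.sublist_append_left Z₁ Z₂).trans hA
  have : Z₁.length ≤ lcsLen A L := le_lcsLen h1A h₁
  have := hZ ▸ (by simp : (Z₁ ++ Z₂).length = Z₁.length + Z₂.length)
  omega

lemma lcsLen_concat_left_le (L B : List α) (a : α) :
    lcsLen (L ++ [a]) B ≤ lcsLen L B + 1 := by
  obtain ⟨Z, hZ, hA, hB⟩ := lcsLen_spec (L ++ [a]) B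
  rw [List.sublist_append_iff] at hA
  obtain ⟨Z₁, Z₂, rfl, h₁, h₂⟩ := hA
  have hlen2 : Z₂.length ≤ 1 := by simpa using h₂.length_le
  have h1B : Z₁.Sublist B := (List.sublist_append_left Z₁ Z₂).trans hB
  have : Z₁.length ≤ lcsLen L B := le_lcsLen h₁ h1B
  have := hZ ▸ (by simp : (Z₁ ++ Z₂).length = Z₁.length + Z₂.length)
  omega

/-- step intermediate value theorem for ℕ-valued step functions -/
lemma step_ivt {f : ℕ → ℕ} (h0 : f 0 = 0) (hstep : ∀ k, f (k+1) ≤ f k + 1)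
    {m t : ℕ} (ht : t ≤ f m) : ∃ j, j ≤ m ∧ f j = t := by
  induction m with
  | zero => exact ⟨0, le_refl _, by omega⟩
  | succ m ih =>
      by_cases h : t ≤ f m
      · obtain ⟨j, hj, hfj⟩ := ih h
        exact ⟨j, by omega, hfj⟩
      · exact ⟨m + 1, le_refl _, by have := hstep m; omega⟩

/-- the column step property: lcs length of a fixed `A` with prefixes of `B`. -/
lemma col_step (A B : List α) (k : ℕ) :
    lcsLen A (B.take (k+1)) ≤ lcsLen A (B.take k) + 1 := by
  rw [List.take_succ]
  cases h : B[k]? with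
  | none => simp
  | some b =>
      simp only [Option.toList_some]
      exact lcsLen_concat_right_le A (B.take k) b

lemma eTab_le {A B : List α} {i s j : ℕ}
    (h : lcsLen (A.take i) (B.take j) = s) : eTab A B i s ≤ j :=
  Nat.sInf_le (Or.inl h)

lemma eTab_le_succ_len (A B : List α) (i s : ℕ) : eTab A B i s ≤ B.length + 1 :=
  Nat.sInf_le (Or.inr rfl)

lemma eTab_spec {A B : List α} {i s : ℕ} (h : eTab A B i s ≤ B.length) :
    lcsLen (A.take i) (B.take (eTab A B i s)) = s := by
  have hne : ({j | lcsLen (A.take i) (B.take j) = s} ∪ {B.length + 1}).Nonempty :=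
    ⟨B.length + 1, Or.inr rfl⟩
  have := Nat.sInf_mem hne
  rcases this with hmem | hmem
  · exact hmem
  · exfalso; rw [Set.mem_singleton_iff] at hmem; unfold eTab at h; omega

/-- If the lcs length reaches `s` at prefix `m`, the first time it hits `s` is ≤ `m`. -/
lemma eTab_le_of_ge {A B : List α} {i s m : ℕ}
    (h : s ≤ lcsLen (A.take i) (B.take m)) : eTab A B i s ≤ m := by
  obtain ⟨j, hj, hfj⟩ := step_ivt (f := fun j => lcsLen (A.take i) (B.take j))
    (by simp [lcsLen_nil]) (col_step (A.take i) B) h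
  exact (eTab_le hfj).trans hj

lemma take_pred_concat (l : List α) (i : ℕ) (h1 : 1 ≤ i) (h2 : i ≤ l.length) :
    l.take i = l.take (i-1) ++ [l[i-1]'(by omega)] := by
  cases i with
  | zero => omega
  | succ k =>
      simp only [Nat.add_sub_cancel]
      rw [List.take_succ, List.getElem?_eq_getElem (by omega)]
      simp

end Aux

/-- the recurrence e(i,s) = min{e(i-1,s), j_{i,s}}. -/
theorem stmt_8 {α : Type*} [Inhabited α] (A B : List α) (i s : ℕ)
    (hi : 1 ≤ i) (him : i ≤ A.length) (hs : 1 ≤ s) :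
    eTab A B i s = min (eTab A B (i-1) s) (jIdx A B i s) := by
  set n := B.length with hn
  have hi1 : i - 1 < A.length := by omega
  have htakei : A.take i = A.take (i-1) ++ [A[i-1]] := take_pred_concat A i hi him
  have hsubA : (A.take (i-1)).Sublist (A.take i) := by
    rw [htakei]; exact List.sublist_append_left _ _
  -- jIdx basic facts
  have hJle : jIdx A B i s ≤ n + 1 := Nat.sInf_le (Or.inr rfl)
  have hEle : eTab A B i s ≤ n + 1 := eTab_le_succ_len A B i s
  have he'le : eTab A B (i-1) s ≤ n + 1 := eTab_le_succ_len A B (i-1) s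
  refine le_antisymm (le_min ?_ ?_) ?_
  · -- eTab i s ≤ eTab (i-1) s
    by_cases h : eTab A B (i-1) s ≤ n
    · have hg := eTab_spec h
      have h2 := lcsLen_mono_left (B := B.take (eTab A B (i-1) s)) hsubA
      rw [hg] at h2
      exact eTab_le_of_ge h2
    · omega
  · -- eTab i s ≤ jIdx
    by_cases hJ : jIdx A B i s ≤ n
    · obtain ⟨hlt, hle, hch⟩ := jIdx_spec A B i s hJ
      set J := jIdx A B i s with hJdef
      have he'' : eTab A B (i-1) (s-1) ≤ n := by omega
      have hg := eTab_spec he''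
      obtain ⟨Z, hZlen, hZA, hZB⟩ := lcsLen_spec (A.take (i-1)) (B.take (eTab A B (i-1) (s-1)))
      have hJ1 : J - 1 < n := by omega
      have hBJ : B[J-1]! = B[J-1] := getElem!_pos B (J-1) hJ1
      have hAi : A[i-1]! = A[i-1] := getElem!_pos A (i-1) hi1
      have hchr : B[J-1] = A[i-1] := by rw [← hBJ, ← hAi]; exact hch
      have htakeJ : B.take J = B.take (J-1) ++ [B[J-1]] :=
        take_pred_concat B J (by omega) (by omega)
      have hZB' : Z.Sublist (B.take (J-1)) := by
        refine hZB.trans ?_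
        have h1 : B.take (eTab A B (i-1) (s-1)) = (B.take (J-1)).take (eTab A B (i-1) (s-1)) := by
          rw [List.take_take]; congr 1; omega
        rw [h1]; exact List.take_sublist _ _
      have hW : (Z ++ [A[i-1]]).Sublist (A.take i) := by
        rw [htakei]; exact hZA.append (List.Sublist.refl _)
      have hWB : (Z ++ [A[i-1]]).Sublist (B.take J) := by
        rw [htakeJ, hchr]; exact hZB'.append (List.Sublist.refl _)
      have : s ≤ lcsLen (A.take i) (B.take J) := by
        have := le_lcsLen hW hWB
        simp only [List.length_append, List.length_singleton] at this
        rw [hZlen, hg] at this; omega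
      exact eTab_le_of_ge this
    · omega
  · -- min ≤ eTab i s
    by_cases hE : eTab A B i s ≤ n
    swap
    · exact le_trans (min_le_left _ _) (by omega)
    have hf := eTab_spec hE
    obtain ⟨Z, hZlen, hZA, hZB⟩ := lcsLen_spec (A.take i) (B.take (eTab A B i s))
    set E := eTab A B i s with hEdef
    rw [hf] at hZlen
    by_cases hcase : Z.Sublist (A.take (i-1))
    · -- the subsequence avoids A[i]; then eTab (i-1) s ≤ E
      have : s ≤ lcsLen (A.take (i-1)) (B.take E) := hZlen ▸ le_lcsLen hcase hZB
      exact le_trans (min_le_left _ _) (eTab_le_of_ge this)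
    · -- the subsequence ends with A[i]
      rw [htakei, List.sublist_append_iff] at hZA
      obtain ⟨Z₁, Z₂, rfl, h₁, h₂⟩ := hZA
      have hZ₂ : Z₂ = [A[i-1]] := by
        cases h₂ with
        | cons _ h => rw [List.sublist_nil] at h; subst h; simp at hcase; exact absurd h₁ hcase
        | cons_cons _ h => rw [List.sublist_nil] at h; rw [h]
      subst hZ₂
      rw [List.append_sublist_iff] at hZB
      obtain ⟨r₁, r₂, hr, hZ₁r, har⟩ := hZB
      rw [List.singleton_sublist] at har
      obtain ⟨u, v, huv⟩ := List.append_of_mem har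
      subst huv
      set q := r₁.length + u.length with hq
      have hElen : (B.take E).length = E := by rw [List.length_take]; omega
      have hlenr : r₁.length + (u.length + (v.length + 1)) = E := by
        have := congrArg List.length hr
        simp [hElen] at this
        omega
      have hqE : q < E := by omega
      have hqn : q < n := by omega
      have hopt : B[q]? = some A[i-1] := by
        have h1 : (B.take E)[q]? = some A[i-1] := by
          rw [hr, List.getElem?_append_right (by omega : r₁.length ≤ q),
            List.getElem?_append_right (by omega : u.length ≤ q - r₁.length)]
          have h0 : q - r₁.length - u.length = 0 := by omega
          rw [h0]
          simp
        rw [List.getElem?_take_of_lt hqE] at h1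
        exact h1
      have hgetq : B[q]'(by omega) = A[i-1] := by
        rw [List.getElem?_eq_getElem (by omega : q < B.length)] at hopt
        exact Option.some.inj hopt
      have hZ₁len : Z₁.length = s - 1 := by
        simp only [List.length_append, List.length_singleton] at hZlen; omega
      -- Z₁ is a sublist of B.take q
      have hZ₁B : Z₁.Sublist (B.take q) := by
        have hr₁ : r₁ = B.take r₁.length := by
          have h2 : (B.take E).take r₁.length = r₁ := by
            rw [hr]; exact List.take_left
          rw [List.take_take, min_eq_left (by omega : r₁.length ≤ E)] at h2
          exact h2.symm
        refine (hZ₁r.trans ?_)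
        rw [hr₁]
        have h1 : B.take r₁.length = (B.take q).take r₁.length := by
          rw [List.take_take, min_eq_left (by omega : r₁.length ≤ q)]
        rw [h1]; exact List.take_sublist _ _
      have hg : s - 1 ≤ lcsLen (A.take (i-1)) (B.take q) :=
        hZ₁len ▸ le_lcsLen h₁ hZ₁B
      have he'' : eTab A B (i-1) (s-1) ≤ q := eTab_le_of_ge hg
      -- q+1 is in the jIdx set
      have hmem : (q + 1) ∈ ({q | eTab A B (i-1) (s-1) < q ∧ q ≤ B.length ∧ B[q-1]! = A[i-1]!}
          ∪ {B.length + 1} : Set ℕ) := by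
        left
        refine ⟨by omega, by omega, ?_⟩
        have hq1 : q + 1 - 1 = q := by omega
        rw [hq1, getElem!_pos B q (by omega), getElem!_pos A (i-1) hi1]
        exact hgetq
      have : jIdx A B i s ≤ q + 1 := Nat.sInf_le hmem
      exact le_trans (min_le_right _ _) (by omega)
end

section
/- Direction (≤) of the STR-EC-LCS recurrence: if Z₁ satisfies Property(i-1,s-1,t), Z₁ is a subsequence of B[1..d(i-1,s-1,t)], j > d(i-1,s-1,t), B[j] = A[i], and overlap(Z₁·A[i]) = k with k < r, then Z₁·A[i] satisfies Property(i,s,k) and is a subsequence of B[1..j]; consequently d(i,s,k) ≤ j. -/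
/-- `overlapLen P S` is the length of the longest prefix of `P` that is a suffix of `S`. -/
def overlapLen {α : Type*} [DecidableEq α] (P S : List α) : ℕ :=
  Nat.findGreatest (fun k => P.take k <:+ S) P.length

/-- `Property A P i s k Z`: Z is a subsequence of A[1..i], Z does not contain P as a
substring, |Z| = s, and overlap(Z) = k. -/
def Property {α : Type*} [DecidableEq α] (A P : List α) (i s k : ℕ) (Z : List α) : Prop :=
  Z.Sublist (A.take i) ∧ ¬ P <:+: Z ∧ Z.length = s ∧ overlapLen P Z = k

/-- `dTab A B P i s k` is the minimum `j` such that some `Z` satisfying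
`Property A P i s k` is a subsequence of `B[1..j]`; `|B| + 1` if no such `Z` exists. -/
noncomputable def dTab {α : Type*} [DecidableEq α] (A B P : List α) (i s k : ℕ) : ℕ :=
  sInf ({j | ∃ Z : List α, Property A P i s k Z ∧ Z.Sublist (B.take j)}
        ∪ {B.length + 1})

lemma take_getElem_bang {α : Type*} [Inhabited α] (l : List α) (n : ℕ) (h : n < l.length) :
    l.take n ++ [l[n]!] = l.take (n+1) := by
  rw [List.take_succ, getElem!_pos l n h]
  simp [List.getElem?_eq_getElem h]

lemma infix_concat_cases {α : Type*} (P Z : List α) (a : α) (h : P <:+: Z ++ [a]) :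
    P <:+: Z ∨ P <:+ Z ++ [a] := by
  rcases h with ⟨u, v, huv⟩
  rcases List.eq_nil_or_concat v with rfl | ⟨v', b, rfl⟩
  · right; exact ⟨u, by simpa using huv⟩
  · left
    have huv' : (u ++ P ++ v') ++ [b] = Z ++ [a] := by
      simpa [List.append_assoc] using huv
    exact ⟨u, v', (List.append_inj' huv' rfl).1⟩

lemma overlapLen_eq_length_of_suffix {α : Type*} [DecidableEq α] (P Z : List α)
    (h : P <:+ Z) : overlapLen P Z = P.length := by
  have h1 : P.length ≤ overlapLen P Z :=
    Nat.le_findGreatest le_rfl (by simpa [List.take_length] using h)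
  have h2 : overlapLen P Z ≤ P.length := Nat.findGreatest_le _
  omega

/-- direction (≤) of the STR-EC-LCS recurrence. -/
theorem stmt_12 {α : Type*} [DecidableEq α] [Inhabited α] (A B P : List α)
    (i s k t j : ℕ) (Z₁ : List α)
    (hi : 1 ≤ i) (him : i ≤ A.length) (hs : 1 ≤ s) (hk : k < P.length)
    (hprop : Property A P (i-1) (s-1) t Z₁)
    (hZB : Z₁.Sublist (B.take (dTab A B P (i-1) (s-1) t)))
    (hj : dTab A B P (i-1) (s-1) t < j) (hjn : j ≤ B.length)
    (hBj : B[j-1]! = A[i-1]!)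
    (hov : overlapLen P (Z₁ ++ [A[i-1]!]) = k) :
    Property A P i s k (Z₁ ++ [A[i-1]!]) ∧
      (Z₁ ++ [A[i-1]!]).Sublist (B.take j) ∧
      dTab A B P i s k ≤ j := by
  obtain ⟨hsubA, hinf, hlen, _⟩ := hprop
  set Z := Z₁ ++ [A[i-1]!] with hZ
  have hi1 : i - 1 < A.length := by omega
  have hj1 : j - 1 < B.length := by omega
  -- Z sublist of A.take i
  have hAtake : A.take (i-1) ++ [A[i-1]!] = A.take i := by
    have := take_getElem_bang A (i-1) hi1
    rwa [show i - 1 + 1 = i by omega] at this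
  have hZA : Z.Sublist (A.take i) := by
    rw [← hAtake]
    exact hsubA.append (List.Sublist.refl _)
  -- no P infix
  have hninf : ¬ P <:+: Z := by
    intro h
    rcases infix_concat_cases P Z₁ _ h with h' | h'
    · exact hinf h'
    · have := overlapLen_eq_length_of_suffix P Z h'
      omega
  -- sublist of B.take j
  have hBtake : B.take (j-1) ++ [B[j-1]!] = B.take j := by
    have := take_getElem_bang B (j-1) hj1
    rwa [show j - 1 + 1 = j by omega] at this
  have hZB' : Z.Sublist (B.take j) := by
    rw [← hBtake, hBj]
    exact (hZB.trans (List.take_sublist_take_left (by omega))).append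
      (List.Sublist.refl _)
  have hPropZ : Property A P i s k Z :=
    ⟨hZA, hninf, by simp [hZ, hlen]; omega, hov⟩
  refine ⟨hPropZ, hZB', ?_⟩
  exact Nat.sInf_le (Set.mem_union_left _ ⟨Z, hPropZ, hZB'⟩)
end

section
/- Direction (≥) of the STR-EC-LCS recurrence: if d(i,s,k) < n+1 witnessed by Z₂ satisfying Property(i,s,k) and a subsequence of B[1..d(i,s,k)], then either d(i,s,k) = d(i-1,s,k), or there exists 0 ≤ t < r such that d(i,s,k) ≥ j_t, where j_t is the smallest position j > d(i-1,s-1,t) with B[j] = A[i] for which some string Z satisfying Property(i-1,s-1,t) (a subsequence of B[1..d(i-1,s-1,t)]) has overlap(Z·A[i]) = k. -/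
/-- `jT A B P i s k t` is the smallest position `j > d(i-1,s-1,t)` in `B` such that
`B[j] = A[i]` and there exists `Z` satisfying `Property(i-1,s-1,t)` that is a
subsequence of `B[1..d(i-1,s-1,t)]` with `overlap(Z·A[i]) = k`; `n+1` if none exists. -/
noncomputable def jT {α : Type*} [DecidableEq α] [Inhabited α]
    (A B P : List α) (i s k t : ℕ) : ℕ :=
  sInf ({j | dTab A B P (i-1) (s-1) t < j ∧ j ≤ B.length ∧ B[j-1]! = A[i-1]! ∧
          ∃ Z : List α, Property A P (i-1) (s-1) t Z ∧
            Z.Sublist (B.take (dTab A B P (i-1) (s-1) t)) ∧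
            overlapLen P (Z ++ [A[i-1]!]) = k}
        ∪ {B.length + 1})

/- ---------- auxiliary lemmas ---------- -/

private lemma findGreatest_congr' {p q : ℕ → Prop} [DecidablePred p] [DecidablePred q]
    {n : ℕ} (h : ∀ m ≤ n, (p m ↔ q m)) :
    Nat.findGreatest p n = Nat.findGreatest q n := by
  induction n with
  | zero => rfl
  | succ n ih =>
    rw [Nat.findGreatest_succ, Nat.findGreatest_succ]
    exact if_congr (h _ le_rfl) rfl (ih fun m hm => h m (hm.trans (Nat.le_succ _)))

private lemma suffix_concat_concat {α : Type*} {L M : List α} {x a : α} :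
    L ++ [x] <:+ M ++ [a] ↔ x = a ∧ L <:+ M := by
  constructor
  · rintro ⟨w, hw⟩
    rw [← List.append_assoc] at hw
    obtain ⟨h1, h2⟩ := List.append_inj' hw (by simp)
    exact ⟨by simpa using h2, ⟨w, h1⟩⟩
  · rintro ⟨rfl, w, rfl⟩
    exact ⟨w, by simp⟩

private lemma overlapLen_le {α : Type*} [DecidableEq α] (P S : List α) :
    overlapLen P S ≤ P.length :=
  Nat.findGreatest_le _

private lemma take_overlapLen_suffix {α : Type*} [DecidableEq α] (P S : List α) :
    P.take (overlapLen P S) <:+ S := by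
  unfold overlapLen
  exact Nat.findGreatest_spec (P := fun k => P.take k <:+ S) (Nat.zero_le _) (by simp)

private lemma le_overlapLen {α : Type*} [DecidableEq α] {P S : List α} {l : ℕ}
    (hl : l ≤ P.length) (h : P.take l <:+ S) : l ≤ overlapLen P S :=
  Nat.le_findGreatest hl h

private lemma suffix_take_iff {α : Type*} [DecidableEq α] {P S : List α} {l : ℕ}
    (hl : l ≤ P.length) :
    P.take l <:+ S ↔ l ≤ overlapLen P S ∧ P.take l <:+ P.take (overlapLen P S) := by
  constructor
  · intro h
    have h1 := le_overlapLen hl h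
    have h2 := overlapLen_le P S
    refine ⟨h1, List.suffix_of_suffix_length_le h (take_overlapLen_suffix P S) ?_⟩
    simp only [List.length_take]
    omega
  · rintro ⟨h1, h2⟩
    exact h2.trans (take_overlapLen_suffix P S)

private lemma overlapLen_concat_congr {α : Type*} [DecidableEq α] {P Z Z' : List α} (a : α)
    (h : overlapLen P Z = overlapLen P Z') :
    overlapLen P (Z ++ [a]) = overlapLen P (Z' ++ [a]) := by
  unfold overlapLen
  refine findGreatest_congr' fun m hm => ?_
  match m with
  | 0 => simp
  | (m+1) =>
    have hm' : m < P.length := hm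
    have ht : P.take (m+1) = P.take m ++ [P[m]] := by
      rw [List.take_succ, List.getElem?_eq_getElem hm']
      rfl
    have e1 := suffix_take_iff (P := P) (S := Z) (le_of_lt hm')
    have e2 := suffix_take_iff (P := P) (S := Z') (le_of_lt hm')
    rw [ht, suffix_concat_concat, suffix_concat_concat, e1, e2, h]

private lemma dTab_le {α : Type*} [DecidableEq α] {A B P : List α} {i s k j : ℕ}
    {Z : List α} (h : Property A P i s k Z) (hZ : Z.Sublist (B.take j)) :
    dTab A B P i s k ≤ j :=
  Nat.sInf_le (Set.mem_union_left _ ⟨Z, h, hZ⟩)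

private lemma dTab_spec {α : Type*} [DecidableEq α] (A B P : List α) (i s k : ℕ) :
    (∃ Z : List α, Property A P i s k Z ∧ Z.Sublist (B.take (dTab A B P i s k)))
      ∨ dTab A B P i s k = B.length + 1 := by
  have hne : ({j | ∃ Z : List α, Property A P i s k Z ∧ Z.Sublist (B.take j)}
        ∪ {B.length + 1} : Set ℕ).Nonempty := ⟨B.length + 1, Set.mem_union_right _ rfl⟩
  have hmem : dTab A B P i s k ∈
      ({j | ∃ Z : List α, Property A P i s k Z ∧ Z.Sublist (B.take j)}
        ∪ {B.length + 1} : Set ℕ) := Nat.sInf_mem hne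
  rcases hmem with h | h
  · exact Or.inl h
  · exact Or.inr h

/-- direction (≥) of the STR-EC-LCS recurrence: if d(i,s,k) < n+1,
witnessed by Z₂, then either d(i,s,k) = d(i-1,s,k) or some t < r has j_t ≤ d(i,s,k). -/
theorem stmt_13 {α : Type*} [DecidableEq α] [Inhabited α] (A B P : List α)
    (i s k : ℕ) (Z₂ : List α)
    (hi : 1 ≤ i) (him : i ≤ A.length) (hs : 1 ≤ s) (hk : k < P.length)
    (hfin : dTab A B P i s k < B.length + 1)
    (hprop : Property A P i s k Z₂)
    (hZB : Z₂.Sublist (B.take (dTab A B P i s k))) :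
    dTab A B P i s k = dTab A B P (i-1) s k ∨
      ∃ t < P.length, jT A B P i s k t ≤ dTab A B P i s k := by
  have hiA : i - 1 < A.length := lt_of_lt_of_le (Nat.sub_lt hi Nat.one_pos) him
  have htake : A.take i = A.take (i-1) ++ [A[i-1]'hiA] := by
    conv_lhs => rw [show i = (i-1)+1 by omega]
    rw [List.take_succ, List.getElem?_eq_getElem hiA]
    rfl
  have htakemono : List.Sublist (A.take (i-1)) (A.take i) := by
    rw [htake]; exact List.sublist_append_left _ _
  have hsub : List.Sublist Z₂ (A.take (i-1) ++ [A[i-1]'hiA]) := htake ▸ hprop.1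
  rw [List.sublist_append_iff] at hsub
  obtain ⟨Z, v, hZ₂, hZA, hv⟩ := hsub
  have hv' : v = [] ∨ v = [A[i-1]'hiA] := by
    cases hv with
    | cons _ h => left; exact List.sublist_nil.mp h
    | cons_cons _ h => right; rw [List.sublist_nil.mp h]
  rcases hv' with rfl | rfl
  · -- Z₂ is a sublist of A.take (i-1): left branch
    left
    have hZZ : Z₂ = Z := by simpa using hZ₂
    have hprop' : Property A P (i-1) s k Z₂ :=
      ⟨by rw [hZZ]; exact hZA, hprop.2.1, hprop.2.2.1, hprop.2.2.2⟩
    have hle₁ : dTab A B P (i-1) s k ≤ dTab A B P i s k := dTab_le hprop' hZB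
    have hle₂ : dTab A B P i s k ≤ dTab A B P (i-1) s k := by
      rcases dTab_spec A B P (i-1) s k with ⟨Z', hPZ', hZ'B⟩ | h
      · exact dTab_le ⟨hPZ'.1.trans htakemono, hPZ'.2⟩ hZ'B
      · omega
    omega
  · -- Z₂ = Z ++ [A[i-1]]: right branch
    right
    set a : α := A[i-1]'hiA with ha
    set d : ℕ := dTab A B P i s k with hd
    set t : ℕ := overlapLen P Z with htdef
    have hZpref : Z <+: Z₂ := ⟨[a], hZ₂.symm⟩
    have hZfree : ¬ P <:+: Z := fun h => hprop.2.1 (h.trans hZpref.isInfix)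
    have hPpos : 0 < P.length := lt_of_le_of_lt (Nat.zero_le k) hk
    have ht_lt : t < P.length := by
      rcases lt_or_eq_of_le (overlapLen_le P Z) with h | h
      · exact h
      · exfalso
        apply hZfree
        have : P.take t <:+ Z := take_overlapLen_suffix P Z
        rw [htdef, h, List.take_length] at this
        exact this.isInfix
    have hZlen : Z.length = s - 1 := by
      have := hprop.2.2.1
      rw [hZ₂] at this
      simp at this
      omega
    have hPropZ : Property A P (i-1) (s-1) t Z := ⟨hZA, hZfree, hZlen, rfl⟩
    -- decompose the embedding of Z₂ in B.take d
    have hZBd : List.Sublist (Z ++ [a]) (B.take d) := hZ₂ ▸ hZB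
    rw [List.append_sublist_iff] at hZBd
    obtain ⟨l₁, l₂, hBd, hl₁, hl₂⟩ := hZBd
    have ha_mem : a ∈ l₂ := hl₂.subset (by simp)
    obtain ⟨u, v2, hl₂'⟩ := List.append_of_mem ha_mem
    set p : ℕ := (l₁ ++ u).length with hp
    have hBd' : B.take d = (l₁ ++ u) ++ a :: v2 := by
      rw [hBd, hl₂', List.append_assoc]
    have hdn : d ≤ B.length := by omega
    have hlenBd : (B.take d).length = d := by
      simp [List.length_take, hdn]
    have hp2 : p = l₁.length + u.length := by simp [hp]
    have hp1d : p + 1 ≤ d := by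
      have := congrArg List.length hBd'
      simp only [hlenBd, List.length_append, List.length_cons] at this
      omega
    have hBp : B.take p = l₁ ++ u := by
      have h1 : (B.take d).take p = l₁ ++ u := by
        rw [hBd']; exact List.take_left
      rw [List.take_take, min_eq_left (by omega)] at h1
      exact h1
    have hZp : List.Sublist Z (B.take p) := by
      rw [hBp]; exact hl₁.trans (List.sublist_append_left l₁ u)
    have hBtake_p1 : B.take (p+1) = (l₁ ++ u) ++ [a] := by
      have h1 : (B.take d).take (p+1) = (l₁ ++ u) ++ [a] := by
        rw [hBd', List.take_append,
            List.take_of_length_le (by omega)]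
        congr 1
        simp [hp]
      rw [List.take_take, min_eq_left (by omega)] at h1
      exact h1
    have hZ₂p1 : List.Sublist Z₂ (B.take (p+1)) := by
      rw [hBtake_p1, hZ₂]
      exact (hl₁.trans (List.sublist_append_left l₁ u)).append (List.Sublist.refl [a])
    have hd_le : d ≤ p + 1 := dTab_le hprop hZ₂p1
    have hdp : d = p + 1 := le_antisymm hd_le hp1d
    have hpB : p < B.length := by omega
    have hpd : p < (B.take d).length := by rw [hlenBd]; omega
    have hBpa : B[p]'hpB = a := by
      have h1 : (B.take d)[p]'hpd = B[p]'hpB := List.getElem_take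
      have h2 : (B.take d)[p]'hpd = a := by
        rw [List.getElem_of_eq hBd' hpd, List.getElem_append_right (by omega)]
        simp [hp]
      exact h1.symm.trans h2
    -- get Z' witnessing d' := dTab (i-1) (s-1) t
    set d' : ℕ := dTab A B P (i-1) (s-1) t with hd'
    have hd'_le : d' ≤ p := dTab_le hPropZ hZp
    obtain ⟨Z', hPZ', hZ'B⟩ :
        ∃ Z' : List α, Property A P (i-1) (s-1) t Z' ∧ Z'.Sublist (B.take d') := by
      rcases dTab_spec A B P (i-1) (s-1) t with h | h
      · exact h
      · omega
    have hoverZ' : overlapLen P (Z' ++ [a]) = k := by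
      have h1 : overlapLen P Z' = overlapLen P Z := by
        rw [hPZ'.2.2.2]
      have h2 := overlapLen_concat_congr a h1
      rw [h2, ← hZ₂, hprop.2.2.2]
    have hAget : A[i-1]! = a := by
      rw [ha]; exact getElem!_pos A (i-1) hiA
    have hBget : B[d-1]! = A[i-1]! := by
      have : d - 1 = p := by omega
      rw [this, hAget, getElem!_pos B p hpB, hBpa]
    refine ⟨t, ht_lt, Nat.sInf_le (Set.mem_union_left _ ?_)⟩
    exact ⟨by omega, by omega, hBget, Z', hPZ', hZ'B, by rw [hAget]; exact hoverZ'⟩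
end
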